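/- arXiv:1309.1849 — 3 statements merged into one kernel-verified Lean document; each statement's English description precedes it below -/
import Mathlib

section
/- Under the hypotheses of the previous item, if one edge direction of the closed reflective polygon A₁ … A_k lies in span(1,i), then the edge directions alternate between span(1,i) and span(1,−i) around the polygon; consequently k must be even. -/
open Complex

/-- The complex-bilinear (non-Hermitian) form on ℂ². -/
noncomputable def Bform (z w : ℂ × ℂ) : ℂ := z.1 * w.1 + z.2 * w.2

/-- The reflection fixing the line spanned by `v` (for `Bform v v ≠ 0`). -/
noncomputable def reflB (v x : ℂ × ℂ) : ℂ × ℂ := (2 * Bform x v / Bform v v) • v - x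

lemma mem_span_pair_iff (w : ℂ) (x : ℂ × ℂ) :
    x ∈ Submodule.span ℂ {((1 : ℂ), w)} ↔ x.2 = w * x.1 := by
  rw [Submodule.mem_span_singleton]
  constructor
  · rintro ⟨c, rfl⟩
    simp [Prod.smul_def, mul_comm]
  · intro h
    exact ⟨x.1, by rw [Prod.smul_def]; ext <;> simp [h, mul_comm]⟩

lemma reflB_swap (v x : ℂ × ℂ) (hv : Bform v v ≠ 0) (s : ℂ) (hs : s * s = -1) :
    (reflB v x).2 = -(s * (reflB v x).1) ↔ x.2 = s * x.1 := by
  have hd : v.1 * v.1 + v.2 * v.2 ≠ 0 := by simpa [Bform] using hv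
  have h1 : v.2 + s * v.1 ≠ 0 := by
    intro h
    apply hd
    have h2 : (v.2 + s * v.1) * (v.2 - s * v.1) = v.1 * v.1 + v.2 * v.2 := by
      linear_combination (-(v.1 * v.1)) * hs
    rw [← h2, h, zero_mul]
  have key : ((reflB v x).2 + s * (reflB v x).1) * (v.1 * v.1 + v.2 * v.2)
      = (x.2 - s * x.1) * (v.2 + s * v.1) ^ 2 := by
    simp only [reflB, Bform, Prod.snd_sub, Prod.fst_sub, Prod.smul_snd, Prod.smul_fst,
      smul_eq_mul]
    have ht : 2 * (x.1 * v.1 + x.2 * v.2) / (v.1 * v.1 + v.2 * v.2) * (v.1 * v.1 + v.2 * v.2)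
        = 2 * (x.1 * v.1 + x.2 * v.2) := div_mul_cancel₀ _ hd
    linear_combination (v.2 + s * v.1) * ht + (-(v.1 ^ 2 * x.2) + 2 * v.1 * v.2 * x.1 + s * v.1 ^ 2 * x.1) * hs
  rw [eq_neg_iff_add_eq_zero, ← sub_eq_zero (a := x.2)]
  constructor
  · intro h
    rw [h, zero_mul] at key
    rcases mul_eq_zero.1 key.symm with h' | h'
    · exact h'
    · exact absurd h' (pow_ne_zero 2 h1)
  · intro h
    rw [h, zero_mul] at key
    rcases mul_eq_zero.1 key with h' | h'
    · exact h'
    · exact absurd h' hd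

/-- In a closed reflective polygon in ℂ², if one edge direction lies in `span(1,i)`, then
the edge directions alternate between `span(1,i)` and `span(1,-i)`; consequently `k` is even. -/
theorem edges_alternate_and_even (k : ℕ) (hk : 2 ≤ k) (A : ZMod k → ℂ × ℂ)
    (hrefl : ∀ j : ZMod k, ∃ v : ℂ × ℂ, v ≠ 0 ∧ Bform v v ≠ 0 ∧
      ∃ c : ℂ, c ≠ 0 ∧ reflB v (A j - A (j - 1)) = c • (A (j + 1) - A j))
    (hdist : ∀ j : ZMod k, A j ≠ A (j + 1))
    (j₀ : ZMod k) (hiso : A (j₀ + 1) - A j₀ ∈ Submodule.span ℂ {((1 : ℂ), I)}) :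
    (∀ j : ZMod k,
        (A (j + 1) - A j ∈ Submodule.span ℂ {((1 : ℂ), I)} ↔
          A (j + 2) - A (j + 1) ∈ Submodule.span ℂ {((1 : ℂ), -I)})) ∧
      Even k := by
  -- the basic alternation step, for either isotropic direction `s = ±I`
  have step : ∀ j : ZMod k, ∀ s : ℂ, s * s = -1 →
      ((A (j + 1) - A j).2 = s * (A (j + 1) - A j).1 ↔
        (A (j + 2) - A (j + 1)).2 = -s * (A (j + 2) - A (j + 1)).1) := by
    intro j s hs
    obtain ⟨v, hv0, hvv, c, hc, heq⟩ := hrefl (j + 1)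
    have e1 : j + 1 - 1 = j := by ring
    have e2 : j + 1 + 1 = j + 2 := by ring
    rw [e1, e2] at heq
    have h := (reflB_swap v (A (j + 1) - A j) hvv s hs).symm
    rw [heq] at h
    simp only [Prod.smul_snd, Prod.smul_fst, smul_eq_mul] at h
    rw [h]
    rw [show -(s * (c * (A (j + 2) - A (j + 1)).1)) = c * (-s * (A (j + 2) - A (j + 1)).1) by
      ring, mul_right_inj' hc]
  have hne : ∀ j : ZMod k, A (j + 1) - A j ≠ 0 := fun j => sub_ne_zero_of_ne (hdist j).symm
  -- the main alternation statement
  have part1 : ∀ j : ZMod k,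
      (A (j + 1) - A j ∈ Submodule.span ℂ {((1 : ℂ), I)} ↔
        A (j + 2) - A (j + 1) ∈ Submodule.span ℂ {((1 : ℂ), -I)}) := by
    intro j
    rw [mem_span_pair_iff, mem_span_pair_iff]
    exact step j I I_mul_I
  refine ⟨part1, ?_⟩
  have part2 : ∀ j : ZMod k,
      (A (j + 1) - A j ∈ Submodule.span ℂ {((1 : ℂ), -I)} ↔
        A (j + 2) - A (j + 1) ∈ Submodule.span ℂ {((1 : ℂ), I)}) := by
    intro j
    rw [mem_span_pair_iff, mem_span_pair_iff]
    have := step j (-I) (by simp [I_mul_I])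
    simpa using this
  set P : ZMod k → Prop := fun j => A (j + 1) - A j ∈ Submodule.span ℂ {((1 : ℂ), I)} with hP
  set Q : ZMod k → Prop := fun j => A (j + 1) - A j ∈ Submodule.span ℂ {((1 : ℂ), -I)} with hQ
  have hdisj : ∀ j : ZMod k, P j → ¬ Q j := by
    intro j h1 h2
    rw [hP] at h1; rw [hQ] at h2
    rw [mem_span_pair_iff] at h1 h2
    apply hne j
    have hx1 : (A (j + 1) - A j).1 = 0 := by
      have : I * (A (j + 1) - A j).1 = -I * (A (j + 1) - A j).1 := by rw [← h1, ← h2]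
      have h3 : (2 * I) * (A (j + 1) - A j).1 = 0 := by linear_combination this
      rcases mul_eq_zero.1 h3 with h' | h'
      · exact absurd h' (by simp [I_ne_zero])
      · exact h'
    have hx2 : (A (j + 1) - A j).2 = 0 := by rw [h1, hx1, mul_zero]
    exact Prod.ext hx1 hx2
  have hsucc : ∀ n : ℕ, P (j₀ + (2 * n : ℕ)) ∧ Q (j₀ + (2 * n + 1 : ℕ)) := by
    intro n
    induction n with
    | zero =>
      constructor
      · simpa using hiso
      · have := (part1 j₀).1 hiso
        have e : j₀ + ((2 * 0 + 1 : ℕ) : ZMod k) = j₀ + 1 := by push_cast; ring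
        rw [e]
        have e2 : j₀ + 1 + 1 = j₀ + 2 := by ring
        rw [hQ]
        simpa [e2] using this
    | succ n ih =>
      obtain ⟨hPn, hQn⟩ := ih
      have eQ : j₀ + ((2 * n + 1 : ℕ) : ZMod k) + 1 = j₀ + ((2 * (n + 1) : ℕ) : ZMod k) := by
        push_cast; ring
      have eQ2 : j₀ + ((2 * n + 1 : ℕ) : ZMod k) + 2 = j₀ + ((2 * (n + 1) : ℕ) : ZMod k) + 1 := by
        push_cast; ring
      have hPn1 : P (j₀ + (2 * (n + 1) : ℕ)) := by
        have := (part2 (j₀ + ((2 * n + 1 : ℕ) : ZMod k))).1 hQn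
        rw [hP]
        rw [eQ, eQ2] at this
        exact this
      refine ⟨hPn1, ?_⟩
      have eP : j₀ + ((2 * (n + 1) : ℕ) : ZMod k) + 1 = j₀ + ((2 * (n + 1) + 1 : ℕ) : ZMod k) := by
        push_cast; ring
      have eP2 : j₀ + ((2 * (n + 1) : ℕ) : ZMod k) + 2
          = j₀ + ((2 * (n + 1) + 1 : ℕ) : ZMod k) + 1 := by
        push_cast; ring
      have := (part1 (j₀ + ((2 * (n + 1) : ℕ) : ZMod k))).1 hPn1
      rw [hQ]
      rw [eP, eP2] at this
      exact this
  by_contra hodd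
  rw [Nat.not_even_iff_odd] at hodd
  obtain ⟨m, hm⟩ := hodd
  have hQk : Q (j₀ + ((2 * m + 1 : ℕ) : ZMod k)) := (hsucc m).2
  have hcast : ((2 * m + 1 : ℕ) : ZMod k) = 0 := by
    rw [← hm]; exact ZMod.natCast_self k
  rw [hcast, add_zero] at hQk
  exact hdisj j₀ (by simpa using hiso) hQk
end

section
/- A closed polygon in ℂ² with an odd number k of vertices, all consecutive vertices distinct, whose edges obey the complex reflection law at every vertex (reflection in some non-isotropic line), cannot have any isotropic edge direction. -/
open Complex

lemma mem_span_iff_aux (ε : ℂ) (x : ℂ × ℂ) :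
    x ∈ Submodule.span ℂ {((1:ℂ), ε)} ↔ x.2 = ε * x.1 := by
  rw [Submodule.mem_span_singleton]
  constructor
  · rintro ⟨a, rfl⟩
    simp [Prod.smul_def, mul_comm]
  · intro h
    refine ⟨x.1, ?_⟩
    ext <;> simp [Prod.smul_def, h, mul_comm]

lemma reflB_mem_aux (ε : ℂ) (hε : ε ^ 2 = -1) (v x : ℂ × ℂ) (hv : Bform v v ≠ 0)
    (hx : x ∈ Submodule.span ℂ {((1:ℂ), ε)}) :
    reflB v x ∈ Submodule.span ℂ {((1:ℂ), -ε)} := by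
  rw [mem_span_iff_aux] at hx ⊢
  obtain ⟨x1, x2⟩ := x
  simp only at hx
  subst hx
  have hv' : v.1 * v.1 + v.2 * v.2 ≠ 0 := hv
  simp only [reflB, Bform, Prod.smul_def, smul_eq_mul, Prod.fst_sub, Prod.snd_sub]
  have hv'' : v.2 ^ 2 + v.1 ^ 2 ≠ 0 := by rw [pow_two, pow_two, add_comm]; exact hv'
  field_simp
  linear_combination (2 * x1 * v.1 * v.2 * (v.2 ^ 2 + v.1 ^ 2)⁻¹) * hε + 2 * x1 * ε * (mul_inv_cancel₀ hv'')

/-- A closed reflective polygon in ℂ² with an odd number of vertices cannot have any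
isotropic edge direction. -/
theorem odd_polygon_no_isotropic_edge (k : ℕ) (hk : 2 ≤ k) (hodd : Odd k)
    (A : ZMod k → ℂ × ℂ)
    (hrefl : ∀ j : ZMod k, ∃ v : ℂ × ℂ, v ≠ 0 ∧ Bform v v ≠ 0 ∧
      ∃ c : ℂ, c ≠ 0 ∧ reflB v (A j - A (j - 1)) = c • (A (j + 1) - A j))
    (hdist : ∀ j : ZMod k, A j ≠ A (j + 1)) :
    ¬ ∃ j : ZMod k, A (j + 1) - A j ∈ Submodule.span ℂ {((1 : ℂ), I)} ∨
      A (j + 1) - A j ∈ Submodule.span ℂ {((1 : ℂ), -I)} := by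
  rintro ⟨j, hj⟩
  obtain ⟨ε, hε2, hmem⟩ : ∃ ε : ℂ, ε ^ 2 = -1 ∧
      A (j + 1) - A j ∈ Submodule.span ℂ {((1:ℂ), ε)} := by
    rcases hj with h | h
    · exact ⟨I, by simp [pow_two, Complex.I_mul_I], h⟩
    · exact ⟨-I, by simp [pow_two, Complex.I_mul_I], h⟩
  have key : ∀ n : ℕ, A (j + (n : ZMod k) + 1) - A (j + (n : ZMod k)) ∈
      Submodule.span ℂ {((1:ℂ), (-1)^n * ε)} := by
    intro n
    induction n with
    | zero => simpa using hmem
    | succ n ih =>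
      obtain ⟨v, hv0, hvv, c, hc, hr⟩ := hrefl (j + (n : ZMod k) + 1)
      have hε2' : ((-1)^n * ε) ^ 2 = -1 := by
        rw [mul_pow, ← pow_mul, mul_comm n 2, pow_mul]
        simp [hε2]
      have h1 := reflB_mem_aux _ hε2' v _ hvv ih
      have hsub : j + (n : ZMod k) + 1 - 1 = j + (n : ZMod k) := by ring
      rw [hsub] at hr
      have h2 : A (j + (n : ZMod k) + 1 + 1) - A (j + (n : ZMod k) + 1) =
          c⁻¹ • reflB v (A (j + (n : ZMod k) + 1) - A (j + (n : ZMod k))) := by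
        rw [hr, smul_smul, inv_mul_cancel₀ hc, one_smul]
      have hcast : ((n + 1 : ℕ) : ZMod k) = (n : ZMod k) + 1 := by push_cast; ring
      rw [hcast, ← add_assoc]
      have heps : (-1 : ℂ)^(n+1) * ε = -((-1)^n * ε) := by ring
      rw [heps, h2]
      exact Submodule.smul_mem _ _ h1
  have hk0 : ((k : ℕ) : ZMod k) = 0 := ZMod.natCast_self k
  have hfin := key k
  rw [hk0, add_zero, hodd.neg_one_pow] at hfin
  rw [mem_span_iff_aux] at hmem hfin
  set x := A (j + 1) - A j with hx
  have hε0 : ε ≠ 0 := by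
    intro h; rw [h] at hε2; simp at hε2
  have hx1 : x.1 = 0 := by
    have : ε * x.1 = -1 * ε * x.1 := by rw [← hmem, ← hfin]
    have h2 : (2 * ε) * x.1 = 0 := by linear_combination this
    rcases mul_eq_zero.mp h2 with h | h
    · exact absurd h (by simpa using hε0)
    · exact h
  have hx2 : x.2 = 0 := by rw [hmem, hx1, mul_zero]
  have hx0 : x = 0 := Prod.ext hx1 hx2
  exact hdist j (by rw [← sub_eq_zero]; exact neg_eq_zero.mp (by rw [neg_sub]; exact hx0))
end

section
/- Suppose (L₁, L₂) is a limit of pairs of lines through a fixed point x ∈ ℂ² symmetric with respect to non-isotropic lines ℓ_n through x, where ℓ_n converges to an isotropic line L through x. Then L₁ = L or L₂ = L. Formally: let v_n → v₀ in ℂ²∖{0} with B(v_n, v_n) ≠ 0 and B(v₀, v₀) = 0, let u_n, w_n be unit-normalized nonzero vectors with σ_{v_n}(u_n) ∈ span(w_n), and suppose span(u_n) → span(u), span(w_n) → span(w) in ℙ¹(ℂ). Then span(u) = span(v₀) or span(w) = span(v₀). -/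
open Complex Filter

lemma span_eq_of_det {x y : ℂ × ℂ} (hx : x ≠ 0) (hy : y ≠ 0)
    (h : x.1 * y.2 - x.2 * y.1 = 0) :
    Submodule.span ℂ {x} = Submodule.span ℂ {y} := by
  obtain ⟨c, hc, hxy⟩ : ∃ c : ℂ, c ≠ 0 ∧ x = c • y := by
    rcases eq_or_ne y.1 0 with h1 | h1
    · have hy2 : y.2 ≠ 0 := by
        intro h2; exact hy (Prod.ext h1 h2)
      have hx1 : x.1 = 0 := by
        rw [h1, mul_zero, sub_zero] at h
        exact (mul_eq_zero.mp h).resolve_right hy2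
      have hx2 : x.2 ≠ 0 := by
        intro h2; exact hx (Prod.ext hx1 h2)
      refine ⟨x.2 / y.2, div_ne_zero hx2 hy2, Prod.ext ?_ ?_⟩
      · simp [h1, hx1]
      · simp only [Prod.smul_snd, smul_eq_mul]; field_simp
    · have hx1 : x.1 ≠ 0 := by
        intro h0
        rw [h0, zero_mul, zero_sub, neg_eq_zero] at h
        rcases mul_eq_zero.mp h with h2 | h2
        · exact hx (Prod.ext h0 h2)
        · exact h1 h2
      refine ⟨x.1 / y.1, div_ne_zero hx1 h1, Prod.ext ?_ ?_⟩
      · simp only [Prod.smul_fst, smul_eq_mul]; field_simp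
      · simp only [Prod.smul_snd, smul_eq_mul]; field_simp
        linear_combination -h
  subst hxy
  apply le_antisymm
  · rw [Submodule.span_singleton_le_iff_mem, Submodule.mem_span_singleton]
    exact ⟨c, rfl⟩
  · rw [Submodule.span_singleton_le_iff_mem, Submodule.mem_span_singleton]
    exact ⟨c⁻¹, by rw [smul_smul, inv_mul_cancel₀ hc, one_smul]⟩

/-- Degenerate reflection law at isotropic lines: if pairs of lines `(span uₙ, span wₙ)`
through a point are symmetric with respect to non-isotropic lines `span vₙ`, where
`vₙ → v₀` with `v₀` isotropic, and the lines `span uₙ`, `span wₙ` converge to the lines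
spanned by `u`, `w` (convergence of lines being expressed via converging rescaled
representatives), then the limit pair contains the limit line: `span u = span v₀` or
`span w = span v₀`. -/
theorem limit_reflection_isotropic
    (v : ℕ → ℂ × ℂ) (v₀ u w : ℂ × ℂ) (un wn : ℕ → ℂ × ℂ)
    (hv : Tendsto v atTop (nhds v₀)) (hv₀ : v₀ ≠ 0)
    (hvn : ∀ n, Bform (v n) (v n) ≠ 0) (hiso : Bform v₀ v₀ = 0)
    (hun : ∀ n, ‖un n‖ = 1) (hwn : ∀ n, ‖wn n‖ = 1)
    (hsym : ∀ n, reflB (v n) (un n) ∈ Submodule.span ℂ {wn n})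
    (hu : u ≠ 0) (hw : w ≠ 0)
    (hconvu : ∃ c : ℕ → ℂ, Tendsto (fun n => c n • un n) atTop (nhds u))
    (hconvw : ∃ c : ℕ → ℂ, Tendsto (fun n => c n • wn n) atTop (nhds w)) :
    Submodule.span ℂ {u} = Submodule.span ℂ {v₀} ∨
      Submodule.span ℂ {w} = Submodule.span ℂ {v₀} := by
  by_cases hB : Bform u v₀ = 0
  · left
    apply span_eq_of_det hu hv₀
    simp only [Bform] at hB hiso
    have h1 : v₀.1 ≠ 0 ∨ v₀.2 ≠ 0 := by
      by_contra hcon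
      push_neg at hcon
      exact hv₀ (Prod.ext hcon.1 hcon.2)
    rcases h1 with h1 | h1
    · have key : (u.1 * v₀.2 - u.2 * v₀.1) * v₀.1 = 0 := by
        linear_combination v₀.2 * hB - u.2 * hiso
      exact (mul_eq_zero.mp key).resolve_right h1
    · have key : (u.1 * v₀.2 - u.2 * v₀.1) * v₀.2 = 0 := by
        linear_combination -v₀.1 * hB + u.1 * hiso
      exact (mul_eq_zero.mp key).resolve_right h1
  · right
    obtain ⟨c, hc⟩ := hconvu
    obtain ⟨d, hd⟩ := hconvw
    have hc1 : Tendsto (fun n => (c n • un n).1) atTop (nhds u.1) :=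
      (continuous_fst.tendsto u).comp hc
    have hc2 : Tendsto (fun n => (c n • un n).2) atTop (nhds u.2) :=
      (continuous_snd.tendsto u).comp hc
    have hv1 : Tendsto (fun n => (v n).1) atTop (nhds v₀.1) :=
      (continuous_fst.tendsto v₀).comp hv
    have hv2 : Tendsto (fun n => (v n).2) atTop (nhds v₀.2) :=
      (continuous_snd.tendsto v₀).comp hv
    have hA : Tendsto (fun n => Bform (c n • un n) (v n)) atTop (nhds (Bform u v₀)) := by
      simp only [Bform]
      exact (hc1.mul hv1).add (hc2.mul hv2)
    have hS : Tendsto (fun n => Bform (v n) (v n)) atTop (nhds 0) := by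
      rw [← hiso]
      simp only [Bform]
      exact (hv1.mul hv1).add (hv2.mul hv2)
    set γ : ℕ → ℂ := fun n => Bform (v n) (v n) / (2 * Bform (c n • un n) (v n)) with hγdef
    have hγ : Tendsto γ atTop (nhds 0) := by
      have h2 : Tendsto (fun n => 2 * Bform (c n • un n) (v n)) atTop
          (nhds (2 * Bform u v₀)) := tendsto_const_nhds.mul hA
      have := hS.div h2 (mul_ne_zero two_ne_zero hB)
      rw [zero_div] at this
      exact this
    set x : ℕ → ℂ × ℂ := fun n => v n - γ n • (c n • un n) with hxdef
    have hx : Tendsto x atTop (nhds v₀) := by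
      have := hv.sub (hγ.smul hc)
      simpa using this
    have hev : ∀ᶠ n in atTop,
        (x n).1 * (d n • wn n).2 - (x n).2 * (d n • wn n).1 = 0 := by
      filter_upwards [hA.eventually_ne hB] with n hn
      obtain ⟨t, ht⟩ := Submodule.mem_span_singleton.mp (hsym n)
      have hSn := hvn n
      have hγcan : γ n * (2 * Bform (c n • un n) (v n)) = Bform (v n) (v n) := by
        simp only [hγdef]
        exact div_mul_cancel₀ _ (mul_ne_zero two_ne_zero hn)
      have h1 := congrArg Prod.fst ht
      have h2 := congrArg Prod.snd ht
      simp only [reflB, Prod.smul_fst, Prod.smul_snd, Prod.fst_sub, Prod.snd_sub,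
        smul_eq_mul] at h1 h2
      simp only [Bform, Prod.smul_fst, Prod.smul_snd, smul_eq_mul] at h1 h2 hSn hn hγcan
      have e : 2 * ((un n).1 * (v n).1 + (un n).2 * (v n).2) /
          ((v n).1 * (v n).1 + (v n).2 * (v n).2) * ((v n).1 * (v n).1 + (v n).2 * (v n).2)
          = 2 * ((un n).1 * (v n).1 + (un n).2 * (v n).2) := div_mul_cancel₀ _ hSn
      have h1 : t * (wn n).1 * ((v n).1 * (v n).1 + (v n).2 * (v n).2) =
          2 * (v n).1 * ((un n).1 * (v n).1 + (un n).2 * (v n).2) -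
            (un n).1 * ((v n).1 * (v n).1 + (v n).2 * (v n).2) := by
        linear_combination ((v n).1 * (v n).1 + (v n).2 * (v n).2) * h1 + (v n).1 * e
      have h2 : t * (wn n).2 * ((v n).1 * (v n).1 + (v n).2 * (v n).2) =
          2 * (v n).2 * ((un n).1 * (v n).1 + (un n).2 * (v n).2) -
            (un n).2 * ((v n).1 * (v n).1 + (v n).2 * (v n).2) := by
        linear_combination ((v n).1 * (v n).1 + (v n).2 * (v n).2) * h2 + (v n).2 * e
      have hK : (2 : ℂ) * (c n * ((un n).1 * (v n).1 + (un n).2 * (v n).2)) ≠ 0 :=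
        mul_ne_zero two_ne_zero (fun h => hn (by linear_combination h))
      simp only [hxdef, Prod.fst_sub, Prod.snd_sub, Prod.smul_fst, Prod.smul_snd,
        smul_eq_mul]
      have main : (2 : ℂ) * (c n * ((un n).1 * (v n).1 + (un n).2 * (v n).2)) *
          (((v n).1 - γ n * (c n * (un n).1)) * (d n * (wn n).2) -
            ((v n).2 - γ n * (c n * (un n).2)) * (d n * (wn n).1)) = 0 := by
        linear_combination (-(c n * d n * (wn n).2)) * h1 + (c n * d n * (wn n).1) * h2 +
          (-(c n * (un n).1 * d n * (wn n).2) + c n * (un n).2 * d n * (wn n).1) * hγcan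
      exact (mul_eq_zero.mp main).resolve_left hK
    have hlim : Tendsto (fun n => (x n).1 * (d n • wn n).2 - (x n).2 * (d n • wn n).1)
        atTop (nhds (v₀.1 * w.2 - v₀.2 * w.1)) := by
      have hx1 : Tendsto (fun n => (x n).1) atTop (nhds v₀.1) :=
        (continuous_fst.tendsto v₀).comp hx
      have hx2 : Tendsto (fun n => (x n).2) atTop (nhds v₀.2) :=
        (continuous_snd.tendsto v₀).comp hx
      have hd1 : Tendsto (fun n => (d n • wn n).1) atTop (nhds w.1) :=
        (continuous_fst.tendsto w).comp hd
      have hd2 : Tendsto (fun n => (d n • wn n).2) atTop (nhds w.2) :=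
        (continuous_snd.tendsto w).comp hd
      exact (hx1.mul hd2).sub (hx2.mul hd1)
    have hdet : v₀.1 * w.2 - v₀.2 * w.1 = 0 := by
      have h0 : Tendsto (fun n => (x n).1 * (d n • wn n).2 - (x n).2 * (d n • wn n).1)
          atTop (nhds 0) := by
        refine Tendsto.congr' ?_
          (tendsto_const_nhds : Tendsto (fun _ : ℕ => (0 : ℂ)) atTop (nhds 0))
        filter_upwards [hev] with n h using h.symm
      exact tendsto_nhds_unique hlim h0
    apply span_eq_of_det hw hv₀
    linear_combination -hdet
end
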